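/- The point P₁ = (15, 90) on the elliptic curve Y² = X³ - 2025X + 35100 over ℚ has infinite order. -/

import Mathlib

/-- The elliptic curve Y² = X³ - 2025X + 35100 over ℚ. -/
def E00 : WeierstrassCurve.Affine ℚ :=
  { a₁ := 0, a₂ := 0, a₃ := 0, a₄ := -2025, a₆ := 35100 }

open WeierstrassCurve.Affine

lemma Ea1 : E00.a₁ = 0 := rfl
lemma Ea2 : E00.a₂ = 0 := rfl
lemma Ea3 : E00.a₃ = 0 := rfl
lemma Ea4 : E00.a₄ = -2025 := rfl

lemma negY_eq (x y : ℚ) : E00.negY x y = -y := by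
  simp [WeierstrassCurve.Affine.negY, Ea1, Ea3]

lemma ne_negY {x y : ℚ} (hy : y ≠ 0) : y ≠ E00.negY x y := by
  rw [negY_eq]; intro hc; apply hy; linarith

lemma slope_eq (x y : ℚ) (hy : y ≠ 0) : E00.slope x x y y = (3*x^2 - 2025)/(2*y) := by
  rw [slope_of_Y_ne rfl (ne_negY hy), negY_eq, Ea1, Ea2, Ea4]
  ring_nf

lemma addX_eq (x L : ℚ) : E00.addX x x L = L^2 - 2*x := by
  rw [WeierstrassCurve.Affine.addX, Ea1, Ea2]; ring

lemma addY_eq (x y L : ℚ) :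
    E00.addY x x y L = L * (x - E00.addX x x L) - y := by
  rw [WeierstrassCurve.Affine.addY, negY_eq, WeierstrassCurve.Affine.negAddY]; ring


lemma odd_ne_zero {b : ℤ} (hb : Odd b) : b ≠ 0 := by
  rcases hb with ⟨m, hm⟩; omega

lemma even16 {k : ℕ} (hk : 1 ≤ k) : Even ((16:ℤ)^k) :=
  (by decide : Even (16:ℤ)).pow_of_ne_zero (by omega)

lemma even4 {k : ℕ} (hk : 1 ≤ k) : Even ((4:ℤ)^k) :=
  (by decide : Even (4:ℤ)).pow_of_ne_zero (by omega)

lemma step {k : ℕ} (hk : 1 ≤ k) {x y : ℚ} {a b e f : ℤ}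
    (ha : Odd a) (hb : Odd b) (he : Odd e) (hf : Odd f)
    (hx : x * (e * 4^k) = a) (hy : y * (f * 8^k) = b) :
    ∃ a' b' e' f' : ℤ, Odd a' ∧ Odd b' ∧ Odd e' ∧ Odd f' ∧
      E00.addX x x (E00.slope x x y y) * (e' * 4^(k+1)) = a' ∧
      E00.addY x x y (E00.slope x x y y) * (f' * 8^(k+1)) = b' := by
  set c : ℤ := 3*a^2 - 2025*e^2*16^k with hc
  set a' : ℤ := f^2*c^2 - 8*a*b^2*e^3 with ha'
  set g : ℤ := 4*a*e^3*b^2 - a' with hg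
  set b' : ℤ := f^2*c*g - 8*b^4*e^6 with hb'
  have hoc : Odd c := ((by decide : Odd (3:ℤ)).mul (ha.pow)).sub_even
    ((even16 hk).mul_left _)
  have hoa' : Odd a' := by
    rcases (hf.pow).mul (hoc.pow) with ⟨m, hm⟩
    exact ⟨m - 4*a*b^2*e^3, by rw [ha', hm]; ring⟩
  have hog : Odd g := by
    rcases hoa' with ⟨m, hm⟩
    exact ⟨2*a*e^3*b^2 - m - 1, by rw [hg, hm]; ring⟩
  have hob' : Odd b' := by
    rcases ((hf.pow).mul hoc).mul hog with ⟨m, hm⟩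
    exact ⟨m - 4*b^4*e^6, by rw [hb', hm]; ring⟩
  refine ⟨a', b', e^4*b^2, f*e^6*b^3, hoa', hob', (he.pow).mul (hb.pow),
    (hf.mul (he.pow)).mul (hb.pow), ?_, ?_⟩ <;>
  · have hbq : (b:ℚ) ≠ 0 := Int.cast_ne_zero.mpr (odd_ne_zero hb)
    have heq : (e:ℚ) ≠ 0 := Int.cast_ne_zero.mpr (odd_ne_zero he)
    have hfq : (f:ℚ) ≠ 0 := Int.cast_ne_zero.mpr (odd_ne_zero hf)
    have ht : ((2:ℚ)^k) ≠ 0 := by positivity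
    have h4 : (4:ℚ)^k = ((2:ℚ)^k)^2 := by
      rw [← pow_mul, mul_comm, pow_mul]; norm_num
    have h8 : (8:ℚ)^k = ((2:ℚ)^k)^3 := by
      rw [← pow_mul, mul_comm, pow_mul]; norm_num
    have hyne : y ≠ 0 := by
      intro h0
      rw [h0, zero_mul] at hy
      exact odd_ne_zero hb (by exact_mod_cast hy.symm)
    have xval : x = a / (e * ((2:ℚ)^k)^2) := by
      rw [eq_div_iff (mul_ne_zero heq (pow_ne_zero 2 ht))]
      rw [← h4]; exact hx
    have yval : y = b / (f * ((2:ℚ)^k)^3) := by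
      rw [eq_div_iff (mul_ne_zero hfq (pow_ne_zero 3 ht))]
      rw [← h8]; exact hy
    rw [slope_eq x y hyne]
    try rw [addY_eq]
    rw [addX_eq]
    rw [xval, yval]
    push_cast [ha', hg, hb', hc]
    have h16 : ((16:ℚ))^k = ((2:ℚ)^k)^4 := by
      rw [← pow_mul, mul_comm, pow_mul]; norm_num
    simp only [pow_succ, h4, h8, h16]
    field_simp
    ring

open WeierstrassCurve.Affine.Point in
lemma key (h : E00.Nonsingular 15 90) (j : ℕ) (hj : 1 ≤ j) :
    ∃ (x y : ℚ) (hns : E00.Nonsingular x y) (a b e f : ℤ),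
      Odd a ∧ Odd b ∧ Odd e ∧ Odd f ∧
      (2^j) • WeierstrassCurve.Affine.Point.some _ _ h
        = WeierstrassCurve.Affine.Point.some _ _ hns ∧
      x * (e * 4^j) = a ∧ y * (f * 8^j) = b := by
  induction j with
  | zero => omega
  | succ j ih =>
    rcases Nat.eq_or_lt_of_le hj with h1 | h1
    · -- j + 1 = 1, base case
      have hj0 : j = 0 := by omega
      subst hj0
      have hyne : (90:ℚ) ≠ E00.negY 15 90 := ne_negY (by norm_num)
      refine ⟨_, _, nonsingular_add h h (fun hc => hyne hc.2), 105, -45, 1, 1,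
        ⟨52, by ring⟩, ⟨-23, by ring⟩, ⟨0, by ring⟩, ⟨0, by ring⟩, ?_, ?_, ?_⟩
      · rw [pow_one, two_nsmul]
        exact add_self_of_Y_ne hyne
      · rw [addX_eq, slope_eq 15 90 (by norm_num)]; norm_num
      · rw [addY_eq, addX_eq, slope_eq 15 90 (by norm_num)]; norm_num
    · obtain ⟨x, y, hns, a, b, e, f, ha, hb, he, hf, hpt, hx, hy⟩ := ih (by omega)
      have hyne0 : y ≠ 0 := by
        intro h0
        rw [h0, zero_mul] at hy
        exact odd_ne_zero hb (by exact_mod_cast hy.symm)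
      have hyne : y ≠ E00.negY x y := ne_negY hyne0
      obtain ⟨a', b', e', f', hoa', hob', hoe', hof', hx', hy'⟩ :=
        step (by omega : 1 ≤ j) ha hb he hf hx hy
      refine ⟨_, _, nonsingular_add hns hns (fun hc => hyne hc.2), a', b', e', f',
        hoa', hob', hoe', hof', ?_, hx', hy'⟩
      have h2 : (2:ℕ)^(j+1) • WeierstrassCurve.Affine.Point.some _ _ h
          = (2:ℕ) • ((2:ℕ)^j • WeierstrassCurve.Affine.Point.some _ _ h) := by
        rw [smul_smul]
        congr 1
        ring
      rw [h2, hpt, two_nsmul]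
      exact add_self_of_Y_ne hyne

lemma no_collision {j₁ j₂ : ℕ} (hlt : j₁ < j₂) {x : ℚ} {a e a' e' : ℤ}
    (ha : Odd a) (he : Odd e) (ha' : Odd a') (he' : Odd e')
    (h1 : x * (e * 4^j₁) = a) (h2 : x * (e' * 4^j₂) = a') : False := by
  have hq : ((a * e' * 4^j₂ : ℤ) : ℚ) = ((a' * e * 4^j₁ : ℤ) : ℚ) := by
    push_cast
    rw [← h1, ← h2]
    ring
  have hz : a * e' * 4^j₂ = a' * e * 4^j₁ := by exact_mod_cast hq
  obtain ⟨d, hd⟩ : ∃ d, j₂ = j₁ + d ∧ 1 ≤ d := ⟨j₂ - j₁, by omega, by omega⟩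
  obtain ⟨hd1, hd2⟩ := hd
  rw [hd1, pow_add] at hz
  have hz2 : a * e' * 4^d = a' * e := by
    have h4 : ((4:ℤ)^j₁) ≠ 0 := pow_ne_zero _ (by norm_num)
    apply mul_right_cancel₀ h4
    linarith [hz]
  have hev : Even (a' * e) := by
    rw [← hz2]
    exact (even4 hd2).mul_left _
  exact ((Int.not_odd_iff_even.mpr hev)) (ha'.mul he)

/-- The point P₁ = (15, 90) on Y² = X³ - 2025X + 35100 has infinite order
in the group of rational points. -/
theorem stmt_13 (h : E00.Nonsingular 15 90) :
    ∀ n : ℕ, n ≠ 0 → n • (WeierstrassCurve.Affine.Point.some _ _ h) ≠ 0 := by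
  intro n hn hzero
  set P := WeierstrassCurve.Affine.Point.some _ _ h with hP
  -- pigeonhole: residues of 2^j mod n
  obtain ⟨j₁, hj₁, j₂, hj₂, hne, heq⟩ :=
    Finset.exists_ne_map_eq_of_card_lt_of_maps_to
      (s := Finset.Icc 1 (n+1)) (t := Finset.range n)
      (by simp only [Nat.card_Icc, Finset.card_range]; omega)
      (fun j _ => Finset.mem_range.mpr (Nat.mod_lt _ (Nat.pos_of_ne_zero hn))
        : ∀ j ∈ Finset.Icc 1 (n+1), 2^j % n ∈ Finset.range n)
  -- wlog j₁ < j₂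
  wlog hlt : j₁ < j₂ generalizing j₁ j₂
  · exact this j₂ hj₂ j₁ hj₁ hne.symm heq.symm (by omega)
  -- 2^j₂ = 2^j₁ + n * t
  have hle : 2^j₁ ≤ 2^j₂ := Nat.pow_le_pow_right (by norm_num) hlt.le
  obtain ⟨t, ht⟩ := (Nat.modEq_iff_dvd' hle).mp heq
  have hsum : 2^j₂ = 2^j₁ + n * t := by omega
  have hsame : (2^j₂ : ℕ) • P = (2^j₁ : ℕ) • P := by
    rw [hsum, add_nsmul]
    have : (n * t) • P = t • (n • P) := by
      rw [smul_smul, mul_comm]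
    rw [this, hzero]
    rw [nsmul_zero, add_zero]
  obtain ⟨x₁, y₁, hns₁, a₁, b₁, e₁, f₁, ha₁, hb₁, he₁, hf₁, hpt₁, hx₁, hy₁⟩ :=
    key h j₁ (Finset.mem_Icc.mp hj₁).1
  obtain ⟨x₂, y₂, hns₂, a₂, b₂, e₂, f₂, ha₂, hb₂, he₂, hf₂, hpt₂, hx₂, hy₂⟩ :=
    key h j₂ (Finset.mem_Icc.mp hj₂).1
  rw [hpt₁, hpt₂] at hsame
  have hxeq : x₂ = x₁ := by
    injection hsame
  rw [hxeq] at hx₂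
  exact no_collision hlt ha₁ he₁ ha₂ he₂ hx₁ hx₂
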